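/- Under full coverage, i.e., when all the relevant state subsets coincide (S = S' = S'' = S₁ = … = S₆), the EPIC, DARD, and SRRD canonicalizations are all equal, each reducing to C(R)(s,a,s') = R(s,a,s') + E[γR(s',A,S) − R(s,A,S) − γR(S,A,S)]. -/
import Mathlib

lemma pull_const {St : Type*} [Fintype St] (g f : St → ℝ) (c : ℝ) :
    ∑ x, g x * (c * f x) = c * ∑ x, g x * f x := by
  rw [Finset.mul_sum]; exact Finset.sum_congr rfl fun x _ => by ring

theorem stmt8 {St Ac : Type*} [Fintype St] [Fintype Ac]
    (R : St → Ac → St → ℝ) (γ : ℝ) (hγ0 : 0 ≤ γ) (hγ1 : γ ≤ 1)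
    (DS : St → ℝ) (DA : Ac → ℝ)
    (hDS0 : ∀ s, 0 ≤ DS s) (hDS1 : ∑ s, DS s = 1)
    (hDA0 : ∀ a, 0 ≤ DA a) (hDA1 : ∑ a, DA a = 1) :
    ∀ (s : St) (a : Ac) (s' : St),
    let CEPIC := R s a s'
      + ∑ b, ∑ x, DA b * DS x * (γ * R s' b x - R s b x)
      - γ * ∑ y, ∑ b, ∑ x, DS y * DA b * DS x * R y b x
    let CDARD := R s a s'
      + ∑ b, ∑ x', ∑ x'', DA b * DS x' * DS x'' *
          (γ * R s' b x'' - R s b x' - γ * R x' b x'')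
    let CSRRD := R s a s'
      + ∑ b, ∑ x1, ∑ x2, ∑ x3, ∑ x4, ∑ x5, ∑ x6,
          DA b * DS x1 * DS x2 * DS x3 * DS x4 * DS x5 * DS x6 *
          (γ * R s' b x1 - R s b x2 - γ * R x3 b x4
           + γ ^ 2 * R x1 b x5 - γ * R x2 b x6
           + γ * R x3 b x6 - γ ^ 2 * R x4 b x5)
    let Ccommon := R s a s'
      + ∑ x, ∑ b, ∑ y, DS x * DA b * DS y *
          (γ * R s' b y - R s b y - γ * R x b y)
    CEPIC = Ccommon ∧ CDARD = Ccommon ∧ CSRRD = Ccommon := by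
  intro s a s'
  have hswapC : ∑ x : St, ∑ b : Ac, ∑ y : St, DS x * DA b * DS y *
        (γ * R s' b y - R s b y - γ * R x b y)
      = ∑ b : Ac, ∑ x : St, ∑ y : St, DS x * DA b * DS y *
        (γ * R s' b y - R s b y - γ * R x b y) := Finset.sum_comm ..
  have hswapE : ∑ y : St, ∑ b : Ac, ∑ x : St, DS y * DA b * DS x * R y b x
      = ∑ b : Ac, ∑ y : St, ∑ x : St, DS y * DA b * DS x * R y b x :=
    Finset.sum_comm ..
  have hC : R s a s'
      + ∑ x, ∑ b, ∑ y, DS x * DA b * DS y *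
          (γ * R s' b y - R s b y - γ * R x b y)
      = R s a s'
      + (γ * (∑ b, DA b * ∑ x, DS x * R s' b x)
        - (∑ b, DA b * ∑ x, DS x * R s b x)
        - γ * (∑ b, DA b * ∑ x, DS x * ∑ y, DS y * R x b y)) := by
    rw [hswapC]
    simp only [mul_sub, mul_add, sub_mul, add_mul, mul_assoc,
      Finset.sum_sub_distrib, Finset.sum_add_distrib,
      ← Finset.mul_sum, ← Finset.sum_mul, pull_const, hDS1, hDA1, one_mul, mul_one]
  have hE : R s a s'
      + ∑ b, ∑ x, DA b * DS x * (γ * R s' b x - R s b x)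
      - γ * ∑ y, ∑ b, ∑ x, DS y * DA b * DS x * R y b x
      = R s a s'
      + (γ * (∑ b, DA b * ∑ x, DS x * R s' b x)
        - (∑ b, DA b * ∑ x, DS x * R s b x)
        - γ * (∑ b, DA b * ∑ x, DS x * ∑ y, DS y * R x b y)) := by
    rw [hswapE]
    simp only [mul_sub, mul_add, sub_mul, add_mul, mul_assoc,
      Finset.sum_sub_distrib, Finset.sum_add_distrib,
      ← Finset.mul_sum, ← Finset.sum_mul, pull_const, hDS1, hDA1, one_mul, mul_one]
    ring
  have hD : R s a s'
      + ∑ b, ∑ x', ∑ x'', DA b * DS x' * DS x'' *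
          (γ * R s' b x'' - R s b x' - γ * R x' b x'')
      = R s a s'
      + (γ * (∑ b, DA b * ∑ x, DS x * R s' b x)
        - (∑ b, DA b * ∑ x, DS x * R s b x)
        - γ * (∑ b, DA b * ∑ x, DS x * ∑ y, DS y * R x b y)) := by
    simp only [mul_sub, mul_add, sub_mul, add_mul, mul_assoc,
      Finset.sum_sub_distrib, Finset.sum_add_distrib,
      ← Finset.mul_sum, ← Finset.sum_mul, pull_const, hDS1, hDA1, one_mul, mul_one]
  have hS : R s a s'
      + ∑ b, ∑ x1, ∑ x2, ∑ x3, ∑ x4, ∑ x5, ∑ x6,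
          DA b * DS x1 * DS x2 * DS x3 * DS x4 * DS x5 * DS x6 *
          (γ * R s' b x1 - R s b x2 - γ * R x3 b x4
           + γ ^ 2 * R x1 b x5 - γ * R x2 b x6
           + γ * R x3 b x6 - γ ^ 2 * R x4 b x5)
      = R s a s'
      + (γ * (∑ b, DA b * ∑ x, DS x * R s' b x)
        - (∑ b, DA b * ∑ x, DS x * R s b x)
        - γ * (∑ b, DA b * ∑ x, DS x * ∑ y, DS y * R x b y)) := by
    simp only [mul_sub, mul_add, sub_mul, add_mul, mul_assoc,
      Finset.sum_sub_distrib, Finset.sum_add_distrib,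
      ← Finset.mul_sum, ← Finset.sum_mul, pull_const, hDS1, hDA1, one_mul, mul_one]
    ring
  exact ⟨hE.trans hC.symm, hD.trans hC.symm, hS.trans hC.symm⟩
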